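/- Let R be a commutative ring, let A and B be groups, and let M be a left R[A ∗ B]-module; regard M as a left R[A]-module (respectively left R[B]-module) by restricting scalars along the ring homomorphism R[A] → R[A ∗ B] (respectively R[B] → R[A ∗ B]) induced by inl (respectively inr). Then the R-linear map (I_{R[A]} ⊗_{R[A]} M) ⊕ (I_{R[B]} ⊗_{R[B]} M) → I_{R[A ∗ B]} ⊗_{R[A ∗ B]} M, sending the class of x ⊗ₜ m in the first summand to the class of (image of x in R[A ∗ B]) ⊗ₜ m, and similarly for the second summand, is well defined and is an isomorphism of R-modules. -/

import Mathlib

/-!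
STATEMENT 5: Let `R` be a commutative ring, `A` and `B` groups, `M` a left
`R[A ∗ B]`-module, regarded as a left `R[A]`-module (resp. `R[B]`-module) by restricting
scalars along the ring homomorphism `R[A] → R[A ∗ B]` (resp. `R[B] → R[A ∗ B]`) induced
by `inl` (resp. `inr`). Then the `R`-linear map
`(I_{R[A]} ⊗_{R[A]} M) ⊕ (I_{R[B]} ⊗_{R[B]} M) → I_{R[A ∗ B]} ⊗_{R[A ∗ B]} M`,
sending the class of `x ⊗ₜ m` in the first summand to the class of
`(image of x in R[A ∗ B]) ⊗ₜ m`, and similarly for the second summand, is well defined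
and an isomorphism of `R`-modules.
-/

open scoped TensorProduct Monoid.Coprod

/-- The augmentation `R[G] →ₐ[R] R` of the group ring `R[G] = MonoidAlgebra R G`. -/
noncomputable def augmentation (R : Type*) [CommRing R] (G : Type*) [Group G] :
    MonoidAlgebra R G →ₐ[R] R :=
  MonoidAlgebra.lift R R G 1

/-- The augmentation ideal `I_{R[G]}` of the group ring. -/
noncomputable def augIdeal (R : Type*) [CommRing R] (G : Type*) [Group G] :
    Ideal (MonoidAlgebra R G) :=
  RingHom.ker (augmentation R G).toRingHom

theorem mul_of_mem_augIdeal {R : Type*} [CommRing R] {G : Type*} [Group G]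
    (x : augIdeal R G) (g : G) :
    (x : MonoidAlgebra R G) * MonoidAlgebra.of R G g ∈ augIdeal R G := by
  have hx : augmentation R G (x : MonoidAlgebra R G) = 0 := x.2
  simp [augIdeal, RingHom.mem_ker, map_mul, hx]

theorem augmentation_mapDomain (R : Type*) [CommRing R] {H K : Type*} [Group H] [Group K]
    (f : H →* K) (y : MonoidAlgebra R H) :
    augmentation R K (MonoidAlgebra.mapDomainRingHom R f y) = augmentation R H y := by
  have h : (augmentation R K).comp (MonoidAlgebra.mapDomainAlgHom R R f) = augmentation R H := by
    apply MonoidAlgebra.algHom_ext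
    intro a
    simp [augmentation, MonoidAlgebra.mapDomainAlgHom]
    exact Subsingleton.elim _ _
  have := DFunLike.congr_fun h y
  simpa [MonoidAlgebra.mapDomainAlgHom] using this

/-- The ring homomorphism `R[H] → R[K]` induced by a group homomorphism maps the
augmentation ideal into the augmentation ideal. -/
theorem mapDomain_mem_augIdeal (R : Type*) [CommRing R] {H K : Type*} [Group H] [Group K]
    (f : H →* K) (x : augIdeal R H) :
    MonoidAlgebra.mapDomainRingHom R f (x : MonoidAlgebra R H) ∈ augIdeal R K := by
  have hx : augmentation R H (x : MonoidAlgebra R H) = 0 := x.2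
  show augmentation R K (MonoidAlgebra.mapDomainRingHom R f (x : MonoidAlgebra R H)) = 0
  rw [augmentation_mapDomain R f (x : MonoidAlgebra R H), hx]

section AugTensor

variable (R : Type*) [CommRing R] (H : Type*) [Group H]
variable (M : Type*) [AddCommGroup M] [Module R M]
  [Module (MonoidAlgebra R H) M] [IsScalarTower R (MonoidAlgebra R H) M]

noncomputable local instance : AddCommGroup ((augIdeal R H) ⊗[R] M) :=
  @TensorProduct.addCommGroup R _ (augIdeal R H) M _ _ _ _

/-- The `R`-submodule of relations defining `I_{R[H]} ⊗_{R[H]} M` as a quotient of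
`I_{R[H]} ⊗[R] M`: it is generated by the elements `(x * h) ⊗ₜ m - x ⊗ₜ (h • m)`. -/
noncomputable def augTensorRel : Submodule R ((augIdeal R H) ⊗[R] M) :=
  Submodule.span R
    {z | ∃ (x : augIdeal R H) (h : H) (m : M),
      z = (⟨(x : MonoidAlgebra R H) * MonoidAlgebra.of R H h,
            mul_of_mem_augIdeal x h⟩ : augIdeal R H) ⊗ₜ[R] m
          - x ⊗ₜ[R] ((MonoidAlgebra.of R H h) • m)}

/-- The tensor product `I_{R[H]} ⊗_{R[H]} M` of the augmentation ideal with a left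
`R[H]`-module `M`. -/
noncomputable def augTensor : Type _ :=
  ((augIdeal R H) ⊗[R] M) ⧸ augTensorRel R H M

noncomputable instance : AddCommGroup (augTensor R H M) :=
  inferInstanceAs (AddCommGroup (((augIdeal R H) ⊗[R] M) ⧸ augTensorRel R H M))

noncomputable instance : Module R (augTensor R H M) :=
  inferInstanceAs (Module R (((augIdeal R H) ⊗[R] M) ⧸ augTensorRel R H M))

/-- The class of `x ⊗ₜ m` in `I_{R[H]} ⊗_{R[H]} M`. -/
noncomputable def augTensorMk (x : augIdeal R H) (m : M) : augTensor R H M :=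
  Submodule.Quotient.mk (x ⊗ₜ[R] m)

end AugTensor

section Restrict

variable (R : Type*) [CommRing R] {H K : Type*} [Group H] [Group K] (f : H →* K)
variable (M : Type*) [AddCommGroup M] [Module R M]
  [Module (MonoidAlgebra R K) M] [IsScalarTower R (MonoidAlgebra R K) M]

/-- Restriction of scalars along the ring homomorphism `R[H] →+* R[K]` induced by a group
homomorphism `f : H →* K`. -/
noncomputable def restrictedModule : Module (MonoidAlgebra R H) M :=
  Module.compHom M (MonoidAlgebra.mapDomainRingHom R f)

/-- `I_{R[H]} ⊗_{R[H]} M` where `M` is an `R[K]`-module regarded as an `R[H]`-module by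
restriction of scalars along `f : H →* K`. -/
noncomputable def augTensorRestrict : Type _ :=
  @augTensor R _ H _ M _ _ (restrictedModule R f M)

noncomputable instance : AddCommGroup (augTensorRestrict R f M) :=
  inferInstanceAs (AddCommGroup (@augTensor R _ H _ M _ _ (restrictedModule R f M)))

noncomputable instance : Module R (augTensorRestrict R f M) :=
  inferInstanceAs (Module R (@augTensor R _ H _ M _ _ (restrictedModule R f M)))

/-- The class of `x ⊗ₜ m` in `I_{R[H]} ⊗_{R[H]} M`, for the restricted module
structure. -/
noncomputable def augTensorRestrictMk (x : augIdeal R H) (m : M) : augTensorRestrict R f M :=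
  @augTensorMk R _ H _ M _ _ (restrictedModule R f M) x m

end Restrict

/-- Notation for group homomorphisms, elaborated for generic groups. -/
abbrev GroupHom (H K : Type*) [Group H] [Group K] : Type _ := H →* K

section MkT

variable (R : Type*) [CommRing R] (H : Type*) [Group H]
variable (M : Type*) [AddCommGroup M] [Module R M] [Module (MonoidAlgebra R H) M]

noncomputable local instance : AddCommGroup ((augIdeal R H) ⊗[R] M) :=
  @TensorProduct.addCommGroup R _ (augIdeal R H) M _ _ _ _

theorem of_sub_one_mem_augIdeal (g : H) :
    MonoidAlgebra.of R H g - 1 ∈ augIdeal R H := by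
  simp [augIdeal, RingHom.mem_ker, map_sub, augmentation, MonoidAlgebra.lift_of]

/-- The bilinear "class of `x ⊗ₜ m`" map. -/
noncomputable def mkT : (augIdeal R H) →ₗ[R] M →ₗ[R] augTensor R H M :=
  (TensorProduct.mk R (augIdeal R H) M).compr₂ (augTensorRel R H M).mkQ

theorem mkT_apply (x : augIdeal R H) (m : M) :
    mkT R H M x m = augTensorMk R H M x m := rfl

theorem mkT_rel (x : augIdeal R H) (h : H) (m : M) :
    mkT R H M ⟨(x : MonoidAlgebra R H) * MonoidAlgebra.of R H h,
      mul_of_mem_augIdeal x h⟩ m = mkT R H M x (MonoidAlgebra.of R H h • m) := by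
  show Submodule.Quotient.mk _ = Submodule.Quotient.mk _
  rw [Submodule.Quotient.eq]
  exact Submodule.subset_span ⟨x, h, m, rfl⟩

theorem augmentation_eq_sum (x : MonoidAlgebra R H) :
    augmentation R H x = x.coeff.sum fun _ r => r := by
  rw [augmentation, MonoidAlgebra.lift_apply]
  simp

theorem coeff_sum_eq_zero (x : augIdeal R H) :
    (x : MonoidAlgebra R H).coeff.sum (fun _ r => r) = 0 := by
  rw [← augmentation_eq_sum]
  exact x.2

theorem mkT_eq_sum (x : augIdeal R H) (m : M) :
    mkT R H M x m = (x : MonoidAlgebra R H).coeff.sum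
      (fun g r => r • mkT R H M ⟨MonoidAlgebra.of R H g - 1,
        of_sub_one_mem_augIdeal R H g⟩ m) := by
  classical
  have hx : x = ∑ g ∈ (x : MonoidAlgebra R H).coeff.support,
      (x : MonoidAlgebra R H).coeff g • (⟨MonoidAlgebra.of R H g - 1,
        of_sub_one_mem_augIdeal R H g⟩ : augIdeal R H) := by
    apply Subtype.ext
    push_cast
    rw [Finset.sum_congr rfl (fun g _ => smul_sub ((x : MonoidAlgebra R H).coeff g)
      (MonoidAlgebra.of R H g) 1), Finset.sum_sub_distrib]
    have h1 : ∑ g ∈ (x : MonoidAlgebra R H).coeff.support,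
        (x : MonoidAlgebra R H).coeff g • MonoidAlgebra.of R H g = (x : MonoidAlgebra R H) := by
      have := Finsupp.sum_single (x : MonoidAlgebra R H).coeff
      rw [Finsupp.sum] at this
      calc _ = ∑ g ∈ (x : MonoidAlgebra R H).coeff.support,
            MonoidAlgebra.single g ((x : MonoidAlgebra R H).coeff g) := by
              refine Finset.sum_congr rfl fun g _ => ?_
              show _ • MonoidAlgebra.single g (1:R) = _
              rw [MonoidAlgebra.smul_single', mul_one]
        _ = _ := by
              apply MonoidAlgebra.coeff_injective
              rw [MonoidAlgebra.coeff_sum]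
              simpa [MonoidAlgebra.coeff_single] using this
    have h2 : ∑ g ∈ (x : MonoidAlgebra R H).coeff.support,
        (x : MonoidAlgebra R H).coeff g • (1 : MonoidAlgebra R H) = 0 := by
      rw [← Finset.sum_smul]
      have := coeff_sum_eq_zero R H x
      rw [Finsupp.sum] at this
      rw [this, zero_smul]
    rw [h1, h2, sub_zero]
  conv_lhs => rw [hx]
  rw [map_sum, Finsupp.sum, LinearMap.coe_sum, Finset.sum_apply]
  exact Finset.sum_congr rfl fun g _ => by rw [map_smul, LinearMap.smul_apply]

end MkT
section CrPairs

variable (R : Type*) [CommRing R] (G : Type*) [Group G]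
variable (M : Type*) [AddCommGroup M] [Module R M]
  [Module (MonoidAlgebra R G) M] [IsScalarTower R (MonoidAlgebra R G) M]
variable (N : Type*) [AddCommGroup N] [Module R N]

/-- Left multiplication by a group element as an `R`-linear map on `M`. -/
noncomputable def actL (h : G) : M →ₗ[R] M where
  toFun m := MonoidAlgebra.of R G h • m
  map_add' := smul_add _
  map_smul' r m := smul_comm _ r m

theorem actL_apply (h : G) (m : M) : actL R G M h m = MonoidAlgebra.of R G h • m := rfl

theorem actL_mul (h k : G) : actL R G M (h * k) = (actL R G M h).comp (actL R G M k) := by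
  ext m
  show MonoidAlgebra.of R G (h * k) • m = MonoidAlgebra.of R G h • MonoidAlgebra.of R G k • m
  rw [map_mul, mul_smul]

theorem actL_one : actL R G M 1 = LinearMap.id := by
  ext m
  show MonoidAlgebra.of R G 1 • m = m
  rw [map_one, one_smul]

/-- Pairs `(φ, g)` with the "crossed homomorphism" group law. -/
def CrPairs : Type _ := (M →ₗ[R] N) × G

noncomputable instance : Group (CrPairs R G M N) where
  mul p q := (p.1.comp (actL R G M q.2) + q.1, p.2 * q.2)
  one := (0, 1)
  inv p := (-(p.1.comp (actL R G M p.2⁻¹)), p.2⁻¹)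
  mul_assoc p q r := by
    show (_, _) = (_, _)
    refine Prod.ext ?_ (mul_assoc _ _ _)
    show ((p.1.comp (actL R G M q.2) + q.1).comp (actL R G M r.2) + r.1) =
      (p.1.comp (actL R G M (q.2 * r.2)) + (q.1.comp (actL R G M r.2) + r.1))
    rw [actL_mul, LinearMap.add_comp, LinearMap.comp_assoc, add_assoc]
  one_mul p := by
    show ((0 : M →ₗ[R] N).comp (actL R G M p.2) + p.1, 1 * p.2) = p
    refine Prod.ext ?_ (one_mul _)
    rw [LinearMap.zero_comp, zero_add]
  mul_one p := by
    show (p.1.comp (actL R G M 1) + 0, p.2 * 1) = p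
    refine Prod.ext ?_ (mul_one _)
    rw [actL_one, LinearMap.comp_id, add_zero]
  inv_mul_cancel p := by
    show ((-(p.1.comp (actL R G M p.2⁻¹))).comp (actL R G M p.2) + p.1, p.2⁻¹ * p.2) = (0, 1)
    refine Prod.ext ?_ (inv_mul_cancel _)
    rw [LinearMap.neg_comp, LinearMap.comp_assoc, ← actL_mul, inv_mul_cancel, actL_one,
      LinearMap.comp_id, neg_add_cancel]

theorem CrPairs.mul_def (p q : CrPairs R G M N) :
    p * q = (p.1.comp (actL R G M q.2) + q.1, p.2 * q.2) := rfl

theorem CrPairs.one_def : (1 : CrPairs R G M N) = (0, 1) := rfl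

/-- Projection to the group coordinate is a homomorphism. -/
def CrPairs.sndHom : CrPairs R G M N →* G where
  toFun p := p.2
  map_one' := rfl
  map_mul' _ _ := rfl

end CrPairs
section RestrictSmul

variable (R : Type*) [CommRing R] {H K : Type*} [Group H] [Group K] (f : H →* K)
variable (M : Type*) [AddCommGroup M] [Module R M] [Module (MonoidAlgebra R K) M]

theorem restricted_of_smul (h : H) (m : M) :
    (letI := restrictedModule R f M
    MonoidAlgebra.of R H h • m) = MonoidAlgebra.of R K (f h) • m := by
  show (MonoidAlgebra.mapDomainRingHom R f) (MonoidAlgebra.of R H h) • m = _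
  congr 1
  show MonoidAlgebra.mapDomain f (MonoidAlgebra.single h 1) = _
  rw [MonoidAlgebra.mapDomain_single]
  rfl

end RestrictSmul

section Main

variable (R : Type*) [CommRing R] (A B : Type*) [Group A] [Group B]
variable (M : Type*) [AddCommGroup M] [Module R M]
  [Module (MonoidAlgebra R (A ∗ B)) M] [IsScalarTower R (MonoidAlgebra R (A ∗ B)) M]
variable (f : A →* A ∗ B) (g : B →* A ∗ B)

/-- `mkT` for the restricted `R[A]`-module structure. -/
noncomputable def mkTA : (augIdeal R A) →ₗ[R] M →ₗ[R] augTensorRestrict R f M :=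
  @mkT R _ A _ M _ _ (restrictedModule R f M)

theorem mkTA_rel (x : augIdeal R A) (a : A) (m : M) :
    mkTA R A B M f ⟨(x : MonoidAlgebra R A) * MonoidAlgebra.of R A a,
      mul_of_mem_augIdeal x a⟩ m
      = mkTA R A B M f x (MonoidAlgebra.of R (A ∗ B) (f a) • m) := by
  rw [← restricted_of_smul R f M a m]
  exact @mkT_rel R _ A _ M _ _ (restrictedModule R f M) x a m

theorem mkTA_mul (a₁ a₂ : A) :
    mkTA R A B M f ⟨MonoidAlgebra.of R A (a₁ * a₂) - 1, of_sub_one_mem_augIdeal R A (a₁ * a₂)⟩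
      = (mkTA R A B M f ⟨MonoidAlgebra.of R A a₁ - 1, of_sub_one_mem_augIdeal R A a₁⟩).comp
          (actL R (A ∗ B) M (f a₂))
        + mkTA R A B M f ⟨MonoidAlgebra.of R A a₂ - 1, of_sub_one_mem_augIdeal R A a₂⟩ := by
  refine LinearMap.ext fun m => ?_
  rw [LinearMap.add_apply, LinearMap.comp_apply, actL_apply, ← mkTA_rel]
  have h : (⟨MonoidAlgebra.of R A (a₁ * a₂) - 1, of_sub_one_mem_augIdeal R A (a₁ * a₂)⟩ :
      augIdeal R A) =
    ⟨(MonoidAlgebra.of R A a₁ - 1 : MonoidAlgebra R A) * MonoidAlgebra.of R A a₂,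
      mul_of_mem_augIdeal ⟨_, of_sub_one_mem_augIdeal R A a₁⟩ a₂⟩ +
    ⟨MonoidAlgebra.of R A a₂ - 1, of_sub_one_mem_augIdeal R A a₂⟩ := by
    apply Subtype.ext
    show MonoidAlgebra.of R A (a₁ * a₂) - 1 =
      (MonoidAlgebra.of R A a₁ - 1) * MonoidAlgebra.of R A a₂ + (MonoidAlgebra.of R A a₂ - 1)
    rw [map_mul, sub_mul, one_mul]
    abel
  rw [h, map_add, LinearMap.add_apply]

/-- `mkT` for the restricted `R[B]`-module structure. -/
noncomputable def mkTB : (augIdeal R B) →ₗ[R] M →ₗ[R] augTensorRestrict R g M :=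
  @mkT R _ B _ M _ _ (restrictedModule R g M)

theorem mkTB_rel (y : augIdeal R B) (b : B) (m : M) :
    mkTB R A B M g ⟨(y : MonoidAlgebra R B) * MonoidAlgebra.of R B b,
      mul_of_mem_augIdeal y b⟩ m
      = mkTB R A B M g y (MonoidAlgebra.of R (A ∗ B) (g b) • m) := by
  rw [← restricted_of_smul R g M b m]
  exact @mkT_rel R _ B _ M _ _ (restrictedModule R g M) y b m

theorem mkTB_mul (b₁ b₂ : B) :
    mkTB R A B M g ⟨MonoidAlgebra.of R B (b₁ * b₂) - 1, of_sub_one_mem_augIdeal R B (b₁ * b₂)⟩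
      = (mkTB R A B M g ⟨MonoidAlgebra.of R B b₁ - 1, of_sub_one_mem_augIdeal R B b₁⟩).comp
          (actL R (A ∗ B) M (g b₂))
        + mkTB R A B M g ⟨MonoidAlgebra.of R B b₂ - 1, of_sub_one_mem_augIdeal R B b₂⟩ := by
  refine LinearMap.ext fun m => ?_
  rw [LinearMap.add_apply, LinearMap.comp_apply, actL_apply, ← mkTB_rel]
  have h : (⟨MonoidAlgebra.of R B (b₁ * b₂) - 1, of_sub_one_mem_augIdeal R B (b₁ * b₂)⟩ :
      augIdeal R B) =
    ⟨(MonoidAlgebra.of R B b₁ - 1 : MonoidAlgebra R B) * MonoidAlgebra.of R B b₂,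
      mul_of_mem_augIdeal ⟨_, of_sub_one_mem_augIdeal R B b₁⟩ b₂⟩ +
    ⟨MonoidAlgebra.of R B b₂ - 1, of_sub_one_mem_augIdeal R B b₂⟩ := by
    apply Subtype.ext
    show MonoidAlgebra.of R B (b₁ * b₂) - 1 =
      (MonoidAlgebra.of R B b₁ - 1) * MonoidAlgebra.of R B b₂ + (MonoidAlgebra.of R B b₂ - 1)
    rw [map_mul, sub_mul, one_mul]
    abel
  rw [h, map_add, LinearMap.add_apply]

/-- The crossed homomorphism on `A`. -/
noncomputable def homA : A →* CrPairs R (A ∗ B) M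
    (augTensorRestrict R f M × augTensorRestrict R g M) where
  toFun a := ((LinearMap.inl R _ _).comp
      (mkTA R A B M f ⟨MonoidAlgebra.of R A a - 1, of_sub_one_mem_augIdeal R A a⟩), f a)
  map_one' := by
    have h0 : (⟨MonoidAlgebra.of R A 1 - 1, of_sub_one_mem_augIdeal R A 1⟩ : augIdeal R A)
        = 0 := Subtype.ext (show MonoidAlgebra.of R A 1 - 1 = 0 by rw [map_one, sub_self])
    refine Prod.ext ?_ (map_one f)
    show (LinearMap.inl R _ _).comp
      (mkTA R A B M f ⟨MonoidAlgebra.of R A 1 - 1, of_sub_one_mem_augIdeal R A 1⟩) = 0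
    rw [h0, map_zero, LinearMap.comp_zero]
  map_mul' a₁ a₂ := by
    refine Prod.ext ?_ (map_mul f a₁ a₂)
    show (LinearMap.inl R _ _).comp
        (mkTA R A B M f ⟨MonoidAlgebra.of R A (a₁ * a₂) - 1, of_sub_one_mem_augIdeal R A _⟩)
      = ((LinearMap.inl R _ _).comp
          (mkTA R A B M f ⟨MonoidAlgebra.of R A a₁ - 1, of_sub_one_mem_augIdeal R A a₁⟩)).comp
            (actL R (A ∗ B) M (f a₂))
        + (LinearMap.inl R _ _).comp
          (mkTA R A B M f ⟨MonoidAlgebra.of R A a₂ - 1, of_sub_one_mem_augIdeal R A a₂⟩)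
    rw [mkTA_mul, LinearMap.comp_add, LinearMap.comp_assoc]

/-- The crossed homomorphism on `B`. -/
noncomputable def homB : B →* CrPairs R (A ∗ B) M
    (augTensorRestrict R f M × augTensorRestrict R g M) where
  toFun b := ((LinearMap.inr R _ _).comp
      (mkTB R A B M g ⟨MonoidAlgebra.of R B b - 1, of_sub_one_mem_augIdeal R B b⟩), g b)
  map_one' := by
    have h0 : (⟨MonoidAlgebra.of R B 1 - 1, of_sub_one_mem_augIdeal R B 1⟩ : augIdeal R B)
        = 0 := Subtype.ext (show MonoidAlgebra.of R B 1 - 1 = 0 by rw [map_one, sub_self])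
    refine Prod.ext ?_ (map_one g)
    show (LinearMap.inr R _ _).comp
      (mkTB R A B M g ⟨MonoidAlgebra.of R B 1 - 1, of_sub_one_mem_augIdeal R B 1⟩) = 0
    rw [h0, map_zero, LinearMap.comp_zero]
  map_mul' b₁ b₂ := by
    refine Prod.ext ?_ (map_mul g b₁ b₂)
    show (LinearMap.inr R _ _).comp
        (mkTB R A B M g ⟨MonoidAlgebra.of R B (b₁ * b₂) - 1, of_sub_one_mem_augIdeal R B _⟩)
      = ((LinearMap.inr R _ _).comp
          (mkTB R A B M g ⟨MonoidAlgebra.of R B b₁ - 1, of_sub_one_mem_augIdeal R B b₁⟩)).comp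
            (actL R (A ∗ B) M (g b₂))
        + (LinearMap.inr R _ _).comp
          (mkTB R A B M g ⟨MonoidAlgebra.of R B b₂ - 1, of_sub_one_mem_augIdeal R B b₂⟩)
    rw [mkTB_mul, LinearMap.comp_add, LinearMap.comp_assoc]

/-- The induced crossed homomorphism on the coproduct. -/
noncomputable def bigD : (A ∗ B) →* CrPairs R (A ∗ B) M
    (augTensorRestrict R f M × augTensorRestrict R g M) :=
  Monoid.Coprod.lift (homA R A B M f g) (homB R A B M f g)

noncomputable def dd (x : A ∗ B) : M →ₗ[R]
    (augTensorRestrict R f M × augTensorRestrict R g M) :=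
  (bigD R A B M f g x).1

theorem bigD_snd (hf : ∀ a : A, f a = Monoid.Coprod.inl a)
    (hg : ∀ b : B, g b = Monoid.Coprod.inr b) (x : A ∗ B) :
    (bigD R A B M f g x).2 = x := by
  have h : (CrPairs.sndHom R (A ∗ B) M
      (augTensorRestrict R f M × augTensorRestrict R g M)).comp (bigD R A B M f g)
      = MonoidHom.id (A ∗ B) := by
    apply Monoid.Coprod.hom_ext
    · ext a
      show (bigD R A B M f g (Monoid.Coprod.inl a)).2 = Monoid.Coprod.inl a
      rw [bigD, Monoid.Coprod.lift_apply_inl]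
      exact hf a
    · ext b
      show (bigD R A B M f g (Monoid.Coprod.inr b)).2 = Monoid.Coprod.inr b
      rw [bigD, Monoid.Coprod.lift_apply_inr]
      exact hg b
  exact DFunLike.congr_fun h x

theorem dd_cocycle (hf : ∀ a : A, f a = Monoid.Coprod.inl a)
    (hg : ∀ b : B, g b = Monoid.Coprod.inr b) (x y : A ∗ B) :
    dd R A B M f g (x * y) = (dd R A B M f g x).comp (actL R (A ∗ B) M y)
      + dd R A B M f g y := by
  have h1 := congrArg Prod.fst (map_mul (bigD R A B M f g) x y)
  rw [CrPairs.mul_def] at h1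
  rw [bigD_snd R A B M f g hf hg y] at h1
  exact h1

theorem dd_inl (a : A) (m : M) :
    dd R A B M f g (Monoid.Coprod.inl a) m
      = (mkTA R A B M f ⟨MonoidAlgebra.of R A a - 1, of_sub_one_mem_augIdeal R A a⟩ m, 0) := by
  rw [dd, bigD, Monoid.Coprod.lift_apply_inl]
  rfl

theorem dd_inr (b : B) (m : M) :
    dd R A B M f g (Monoid.Coprod.inr b) m
      = (0, mkTB R A B M g ⟨MonoidAlgebra.of R B b - 1, of_sub_one_mem_augIdeal R B b⟩ m) := by
  rw [dd, bigD, Monoid.Coprod.lift_apply_inr]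
  rfl

end Main
theorem linearCombination_apply_apply {R : Type*} [CommRing R] {α M N : Type*}
    [AddCommGroup M] [Module R M] [AddCommGroup N] [Module R N]
    (v : α → M →ₗ[R] N) (x : α →₀ R) (m : M) :
    Finsupp.linearCombination R v x m = x.sum fun a r => r • v a m := by
  rw [Finsupp.linearCombination_apply, Finsupp.sum, Finsupp.sum]
  simp [LinearMap.sum_apply]

section Main2

variable (R : Type*) [CommRing R] (A B : Type*) [Group A] [Group B]
variable (M : Type*) [AddCommGroup M] [Module R M]
  [Module (MonoidAlgebra R (A ∗ B)) M] [IsScalarTower R (MonoidAlgebra R (A ∗ B)) M]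
variable (f : A →* A ∗ B) (g : B →* A ∗ B)

noncomputable local instance : AddCommGroup ((augIdeal R (A ∗ B)) ⊗[R] M) :=
  @TensorProduct.addCommGroup R _ (augIdeal R (A ∗ B)) M _ _ _ _

/-- Linear extension of the crossed homomorphism `dd` to the group ring. -/
noncomputable def Phi : MonoidAlgebra R (A ∗ B) →ₗ[R]
    (M →ₗ[R] (augTensorRestrict R f M × augTensorRestrict R g M)) :=
  (Finsupp.linearCombination R (dd R A B M f g)).comp
    (MonoidAlgebra.coeffLinearEquiv R).toLinearMap

/-- Right multiplication as an `R`-linear map. -/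
noncomputable def rmul (z : MonoidAlgebra R (A ∗ B)) :
    MonoidAlgebra R (A ∗ B) →ₗ[R] MonoidAlgebra R (A ∗ B) where
  toFun x := x * z
  map_add' u v := add_mul u v z
  map_smul' r u := smul_mul_assoc r u z

theorem rmul_apply (z x : MonoidAlgebra R (A ∗ B)) : rmul R A B z x = x * z := rfl

theorem Phi_single (a : A ∗ B) (r : R) :
    Phi R A B M f g (MonoidAlgebra.single a r) = r • dd R A B M f g a :=
  Finsupp.linearCombination_single R (v := dd R A B M f g) r a

theorem augmentation_single (a : A ∗ B) (r : R) :
    augmentation R (A ∗ B) (MonoidAlgebra.single a r) = r := by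
  show (MonoidAlgebra.lift R R (A ∗ B)) 1 (MonoidAlgebra.single a r) = r
  rw [MonoidAlgebra.lift_single]
  simp

theorem Phi_apply_apply (x : MonoidAlgebra R (A ∗ B)) (m : M) :
    Phi R A B M f g x m = x.coeff.sum fun a r => r • dd R A B M f g a m :=
  linearCombination_apply_apply (dd R A B M f g) x.coeff m

theorem Phi_mul_of (hf : ∀ a : A, f a = Monoid.Coprod.inl a)
    (hg : ∀ b : B, g b = Monoid.Coprod.inr b)
    (x : MonoidAlgebra R (A ∗ B)) (h : A ∗ B) (m : M) :
    Phi R A B M f g (x * MonoidAlgebra.of R (A ∗ B) h) m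
      = Phi R A B M f g x (MonoidAlgebra.of R (A ∗ B) h • m)
        + augmentation R (A ∗ B) x • dd R A B M f g h m := by
  have key : ((Phi R A B M f g).flip m).comp
        (rmul R A B (MonoidAlgebra.of R (A ∗ B) h))
      = (Phi R A B M f g).flip (MonoidAlgebra.of R (A ∗ B) h • m)
        + LinearMap.smulRight (augmentation R (A ∗ B)).toLinearMap
            (dd R A B M f g h m) := by
    refine MonoidAlgebra.lhom_ext' fun a => LinearMap.ext_ring ?_
    simp only [LinearMap.comp_apply, MonoidAlgebra.lsingle_apply, rmul_apply,
      LinearMap.flip_apply, LinearMap.add_apply, LinearMap.smulRight_apply,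
      AlgHom.toLinearMap_apply]
    rw [show MonoidAlgebra.single a (1 : R) * MonoidAlgebra.of R (A ∗ B) h
        = MonoidAlgebra.single (a * h) (1 : R) by
      rw [MonoidAlgebra.of_apply, MonoidAlgebra.single_mul_single, mul_one]]
    rw [Phi_single, Phi_single, augmentation_single, one_smul, one_smul, one_smul,
      dd_cocycle R A B M f g hf hg a h, LinearMap.add_apply, LinearMap.comp_apply,
      actL_apply]
  have h4 := DFunLike.congr_fun key x
  simpa [rmul_apply] using h4

/-- The underlying linear map of the inverse, on the augmentation ideal. -/
noncomputable def InvAux : (augIdeal R (A ∗ B)) →ₗ[R]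
    (M →ₗ[R] (augTensorRestrict R f M × augTensorRestrict R g M)) where
  toFun x := Phi R A B M f g (x : MonoidAlgebra R (A ∗ B))
  map_add' x y := by
    show Phi R A B M f g ((x + y : augIdeal R (A ∗ B)) : MonoidAlgebra R (A ∗ B)) = _
    rw [show ((x + y : augIdeal R (A ∗ B)) : MonoidAlgebra R (A ∗ B))
        = (x : MonoidAlgebra R (A ∗ B)) + y from rfl, map_add]
  map_smul' r x := by
    show Phi R A B M f g ((r • x : augIdeal R (A ∗ B)) : MonoidAlgebra R (A ∗ B)) = _
    rw [show ((r • x : augIdeal R (A ∗ B)) : MonoidAlgebra R (A ∗ B))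
        = r • (x : MonoidAlgebra R (A ∗ B)) from rfl, map_smul]
    rfl

noncomputable def InvT : ((augIdeal R (A ∗ B)) ⊗[R] M) →ₗ[R]
    (augTensorRestrict R f M × augTensorRestrict R g M) :=
  TensorProduct.lift (InvAux R A B M f g)

theorem hkerInv (hf : ∀ a : A, f a = Monoid.Coprod.inl a)
    (hg : ∀ b : B, g b = Monoid.Coprod.inr b) :
    augTensorRel R (A ∗ B) M ≤ LinearMap.ker (InvT R A B M f g) := by
  rw [augTensorRel, Submodule.span_le]
  rintro _ ⟨x, h, m, rfl⟩
  simp only [SetLike.mem_coe, LinearMap.mem_ker, map_sub]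
  have h1 : InvT R A B M f g
      ((⟨(x : MonoidAlgebra R (A ∗ B)) * MonoidAlgebra.of R (A ∗ B) h,
        mul_of_mem_augIdeal x h⟩ : augIdeal R (A ∗ B)) ⊗ₜ[R] m)
      = Phi R A B M f g ((x : MonoidAlgebra R (A ∗ B)) * MonoidAlgebra.of R (A ∗ B) h) m :=
    rfl
  have h2 : InvT R A B M f g (x ⊗ₜ[R] (MonoidAlgebra.of R (A ∗ B) h • m))
      = Phi R A B M f g (x : MonoidAlgebra R (A ∗ B))
          (MonoidAlgebra.of R (A ∗ B) h • m) := rfl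
  rw [h1, h2, Phi_mul_of R A B M f g hf hg]
  have hx : augmentation R (A ∗ B) (x : MonoidAlgebra R (A ∗ B)) = 0 := x.2
  rw [hx, zero_smul, add_zero, sub_self]

/-- The inverse linear map. -/
noncomputable def InvMap (hf : ∀ a : A, f a = Monoid.Coprod.inl a)
    (hg : ∀ b : B, g b = Monoid.Coprod.inr b) :
    augTensor R (A ∗ B) M →ₗ[R] (augTensorRestrict R f M × augTensorRestrict R g M) :=
  Submodule.liftQ (augTensorRel R (A ∗ B) M) (InvT R A B M f g)
    (hkerInv R A B M f g hf hg)

theorem mapDomainRingHom_of {H K : Type*} [Group H] [Group K] (φ : H →* K) (h : H) :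
    MonoidAlgebra.mapDomainRingHom R φ (MonoidAlgebra.of R H h)
      = MonoidAlgebra.of R K (φ h) := by
  show MonoidAlgebra.mapDomain φ (MonoidAlgebra.single h 1) = _
  rw [MonoidAlgebra.mapDomain_single]
  rfl

/-- Inclusion of augmentation ideals, as an `R`-linear map. -/
noncomputable def jmap {H K : Type*} [Group H] [Group K] (φ : H →* K) :
    (augIdeal R H) →ₗ[R] (augIdeal R K) where
  toFun x := ⟨MonoidAlgebra.mapDomainRingHom R φ (x : MonoidAlgebra R H),
    mapDomain_mem_augIdeal R φ x⟩
  map_add' x y := Subtype.ext (by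
    show MonoidAlgebra.mapDomainRingHom R φ ((x : MonoidAlgebra R H) + y) = _
    rw [map_add]
    rfl)
  map_smul' r x := Subtype.ext (by
    show MonoidAlgebra.mapDomain φ (r • (x : MonoidAlgebra R H)) = _
    rw [MonoidAlgebra.mapDomain_smul]
    rfl)

theorem jmap_mul_of {H K : Type*} [Group H] [Group K] (φ : H →* K)
    (x : augIdeal R H) (h : H) :
    jmap R φ ⟨(x : MonoidAlgebra R H) * MonoidAlgebra.of R H h,
        mul_of_mem_augIdeal x h⟩
      = ⟨(jmap R φ x : MonoidAlgebra R K) * MonoidAlgebra.of R K (φ h),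
        mul_of_mem_augIdeal (jmap R φ x) (φ h)⟩ := by
  apply Subtype.ext
  show MonoidAlgebra.mapDomainRingHom R φ ((x : MonoidAlgebra R H) * MonoidAlgebra.of R H h)
    = _
  rw [map_mul, mapDomainRingHom_of]
  rfl

theorem jmap_of_sub_one {H K : Type*} [Group H] [Group K] (φ : H →* K) (h : H) :
    jmap R φ ⟨MonoidAlgebra.of R H h - 1, of_sub_one_mem_augIdeal R H h⟩
      = ⟨MonoidAlgebra.of R K (φ h) - 1, of_sub_one_mem_augIdeal R K (φ h)⟩ := by
  apply Subtype.ext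
  show MonoidAlgebra.mapDomainRingHom R φ (MonoidAlgebra.of R H h - 1) = _
  rw [map_sub, map_one, mapDomainRingHom_of]

section Summand

variable (H : Type*) [Group H]

noncomputable local instance : AddCommGroup ((augIdeal R H) ⊗[R] M) :=
  @TensorProduct.addCommGroup R _ (augIdeal R H) M _ _ _ _

/-- The forward map out of a single restricted summand, before quotienting. -/
noncomputable def FwdT (φ : H →* A ∗ B) :
    ((augIdeal R H) ⊗[R] M) →ₗ[R] augTensor R (A ∗ B) M :=
  TensorProduct.lift ((mkT R (A ∗ B) M).comp (jmap R φ))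

theorem hkerFwd (φ : H →* A ∗ B) :
    (@augTensorRel R _ H _ M _ _ (restrictedModule R φ M))
      ≤ LinearMap.ker (FwdT R A B M H φ) := by
  rw [augTensorRel, Submodule.span_le]
  rintro _ ⟨x, h, m, rfl⟩
  simp only [SetLike.mem_coe, LinearMap.mem_ker, map_sub]
  have h1 : FwdT R A B M H φ
      ((⟨(x : MonoidAlgebra R H) * MonoidAlgebra.of R H h,
        mul_of_mem_augIdeal x h⟩ : augIdeal R H) ⊗ₜ[R] m)
      = mkT R (A ∗ B) M (jmap R φ ⟨(x : MonoidAlgebra R H) * MonoidAlgebra.of R H h,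
          mul_of_mem_augIdeal x h⟩) m := rfl
  have h2 : FwdT R A B M H φ (x ⊗ₜ[R] (letI := restrictedModule R φ M
        MonoidAlgebra.of R H h • m))
      = mkT R (A ∗ B) M (jmap R φ x) (letI := restrictedModule R φ M
        MonoidAlgebra.of R H h • m) := rfl
  rw [h1, h2, restricted_of_smul R φ M h m, jmap_mul_of, mkT_rel, sub_self]

/-- The forward map on a restricted summand. -/
noncomputable def FwdQ (φ : H →* A ∗ B) :
    augTensorRestrict R φ M →ₗ[R] augTensor R (A ∗ B) M :=
  Submodule.liftQ (@augTensorRel R _ H _ M _ _ (restrictedModule R φ M))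
    (FwdT R A B M H φ) (hkerFwd R A B M H φ)

end Summand

/-- The forward map. -/
noncomputable def Fwd :
    (augTensorRestrict R f M × augTensorRestrict R g M) →ₗ[R] augTensor R (A ∗ B) M :=
  (FwdQ R A B M A f).coprod (FwdQ R A B M B g)

end Main2
section Main3

variable (R : Type*) [CommRing R] (A B : Type*) [Group A] [Group B]
variable (M : Type*) [AddCommGroup M] [Module R M]
  [Module (MonoidAlgebra R (A ∗ B)) M] [IsScalarTower R (MonoidAlgebra R (A ∗ B)) M]
variable (f : A →* A ∗ B) (g : B →* A ∗ B)
variable (hf : ∀ a : A, f a = Monoid.Coprod.inl a) (hg : ∀ b : B, g b = Monoid.Coprod.inr b)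

noncomputable local instance : AddCommGroup ((augIdeal R (A ∗ B)) ⊗[R] M) :=
  @TensorProduct.addCommGroup R _ (augIdeal R (A ∗ B)) M _ _ _ _

noncomputable local instance : AddCommGroup ((augIdeal R A) ⊗[R] M) :=
  @TensorProduct.addCommGroup R _ (augIdeal R A) M _ _ _ _

noncomputable local instance : AddCommGroup ((augIdeal R B) ⊗[R] M) :=
  @TensorProduct.addCommGroup R _ (augIdeal R B) M _ _ _ _

theorem mkTA_eq_sum (x : augIdeal R A) (m : M) :
    mkTA R A B M f x m = (x : MonoidAlgebra R A).coeff.sum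
      (fun a r => r • mkTA R A B M f ⟨MonoidAlgebra.of R A a - 1,
        of_sub_one_mem_augIdeal R A a⟩ m) :=
  @mkT_eq_sum R _ A _ M _ _ (restrictedModule R f M) x m

theorem mkTB_eq_sum (y : augIdeal R B) (m : M) :
    mkTB R A B M g y m = (y : MonoidAlgebra R B).coeff.sum
      (fun b r => r • mkTB R A B M g ⟨MonoidAlgebra.of R B b - 1,
        of_sub_one_mem_augIdeal R B b⟩ m) :=
  @mkT_eq_sum R _ B _ M _ _ (restrictedModule R g M) y m

theorem FwdA_mkT (x : augIdeal R A) (m : M) :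
    FwdQ R A B M A f (mkTA R A B M f x m) = mkT R (A ∗ B) M (jmap R f x) m := rfl

theorem FwdB_mkT (y : augIdeal R B) (m : M) :
    FwdQ R A B M B g (mkTB R A B M g y m) = mkT R (A ∗ B) M (jmap R g y) m := rfl

theorem Fwd_pair (u : augTensorRestrict R f M) (v : augTensorRestrict R g M) :
    Fwd R A B M f g (u, v) = FwdQ R A B M A f u + FwdQ R A B M B g v := rfl

theorem InvMap_mkT (z : augIdeal R (A ∗ B)) (m : M) :
    InvMap R A B M f g hf hg (mkT R (A ∗ B) M z m)
      = Phi R A B M f g (z : MonoidAlgebra R (A ∗ B)) m := rfl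

theorem Phi_mapDomain_apply {H : Type*} [Group H] (φ : H →* A ∗ B)
    (x : MonoidAlgebra R H) (m : M) :
    Phi R A B M f g (MonoidAlgebra.mapDomain φ x) m
      = x.coeff.sum fun h r => r • dd R A B M f g (φ h) m := by
  have h5 : Phi R A B M f g (MonoidAlgebra.mapDomain φ x)
      = Finsupp.linearCombination R (fun h => dd R A B M f g (φ h)) x.coeff :=
    Finsupp.linearCombination_mapDomain R φ x.coeff
  rw [h5]
  exact linearCombination_apply_apply _ x.coeff m

include hf hg in
theorem Fwd_dd (x : A ∗ B) (m : M) :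
    Fwd R A B M f g (dd R A B M f g x m)
      = mkT R (A ∗ B) M ⟨MonoidAlgebra.of R (A ∗ B) x - 1,
          of_sub_one_mem_augIdeal R (A ∗ B) x⟩ m := by
  induction x using Monoid.Coprod.induction_on generalizing m with
  | inl a =>
    have hsub : (⟨MonoidAlgebra.of R (A ∗ B) (f a) - 1,
        of_sub_one_mem_augIdeal R (A ∗ B) (f a)⟩ : augIdeal R (A ∗ B))
        = ⟨MonoidAlgebra.of R (A ∗ B) (Monoid.Coprod.inl a) - 1,
            of_sub_one_mem_augIdeal R (A ∗ B) (Monoid.Coprod.inl a)⟩ :=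
      Subtype.ext (by rw [hf a])
    rw [dd_inl, Fwd_pair, map_zero, add_zero, FwdA_mkT, jmap_of_sub_one, hsub]
  | inr b =>
    have hsub : (⟨MonoidAlgebra.of R (A ∗ B) (g b) - 1,
        of_sub_one_mem_augIdeal R (A ∗ B) (g b)⟩ : augIdeal R (A ∗ B))
        = ⟨MonoidAlgebra.of R (A ∗ B) (Monoid.Coprod.inr b) - 1,
            of_sub_one_mem_augIdeal R (A ∗ B) (Monoid.Coprod.inr b)⟩ :=
      Subtype.ext (by rw [hg b])
    rw [dd_inr, Fwd_pair, map_zero, zero_add, FwdB_mkT, jmap_of_sub_one, hsub]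
  | mul x y ihx ihy =>
    rw [dd_cocycle R A B M f g hf hg, LinearMap.add_apply, LinearMap.comp_apply,
      actL_apply, map_add, ihx, ihy,
      ← mkT_rel R (A ∗ B) M ⟨_, of_sub_one_mem_augIdeal R (A ∗ B) x⟩ y m]
    rw [show (⟨MonoidAlgebra.of R (A ∗ B) (x * y) - 1,
          of_sub_one_mem_augIdeal R (A ∗ B) (x * y)⟩ : augIdeal R (A ∗ B))
        = ⟨(MonoidAlgebra.of R (A ∗ B) x - 1) * MonoidAlgebra.of R (A ∗ B) y,
            mul_of_mem_augIdeal ⟨_, of_sub_one_mem_augIdeal R (A ∗ B) x⟩ y⟩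
          + ⟨MonoidAlgebra.of R (A ∗ B) y - 1, of_sub_one_mem_augIdeal R (A ∗ B) y⟩ from
      Subtype.ext (by
        show MonoidAlgebra.of R (A ∗ B) (x * y) - 1
          = (MonoidAlgebra.of R (A ∗ B) x - 1) * MonoidAlgebra.of R (A ∗ B) y
            + (MonoidAlgebra.of R (A ∗ B) y - 1)
        rw [map_mul, sub_mul, one_mul]
        abel), map_add, LinearMap.add_apply]

set_option maxHeartbeats 2000000 in
include hf hg in
theorem comp_Fwd_Inv :
    (Fwd R A B M f g).comp (InvMap R A B M f g hf hg) = LinearMap.id := by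
  refine Submodule.linearMap_qext _ (TensorProduct.ext' fun x m => ?_)
  show Fwd R A B M f g (Phi R A B M f g (x : MonoidAlgebra R (A ∗ B)) m)
    = Submodule.Quotient.mk (x ⊗ₜ[R] m)
  rw [Phi_apply_apply, map_finsuppSum]
  have h2 : ((x : MonoidAlgebra R (A ∗ B)).coeff.sum fun a r =>
        Fwd R A B M f g (r • dd R A B M f g a m))
      = (x : MonoidAlgebra R (A ∗ B)).coeff.sum fun a r =>
        r • mkT R (A ∗ B) M ⟨MonoidAlgebra.of R (A ∗ B) a - 1,
          of_sub_one_mem_augIdeal R (A ∗ B) a⟩ m := by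
    refine Finsupp.sum_congr fun a _ => ?_
    rw [map_smul, Fwd_dd R A B M f g hf hg]
  rw [h2, ← mkT_eq_sum]
  rfl

set_option maxHeartbeats 2000000 in
theorem comp_InvA :
    (InvMap R A B M f g hf hg).comp (FwdQ R A B M A f)
      = LinearMap.inl R (augTensorRestrict R f M) (augTensorRestrict R g M) := by
  refine Submodule.linearMap_qext _ (TensorProduct.ext' fun x m => ?_)
  show Phi R A B M f g (MonoidAlgebra.mapDomain f (x : MonoidAlgebra R A)) m
    = (Submodule.Quotient.mk (x ⊗ₜ[R] m), 0)
  rw [Phi_mapDomain_apply]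
  have h3 : ((x : MonoidAlgebra R A).coeff.sum fun a r => r • dd R A B M f g (f a) m)
      = (x : MonoidAlgebra R A).coeff.sum fun a r =>
        LinearMap.inl R (augTensorRestrict R f M) (augTensorRestrict R g M)
          (r • mkTA R A B M f ⟨MonoidAlgebra.of R A a - 1,
            of_sub_one_mem_augIdeal R A a⟩ m) := by
    refine Finsupp.sum_congr fun a _ => ?_
    rw [hf a, dd_inl, LinearMap.inl_apply]
    rw [show ∀ (u : augTensorRestrict R f M) (r : R),
        r • ((u, (0 : augTensorRestrict R g M))) = (r • u, (0 : augTensorRestrict R g M))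
      from fun u r => by rw [Prod.smul_mk, smul_zero]]
  rw [h3, ← map_finsuppSum, ← mkTA_eq_sum R A B M f x m, LinearMap.inl_apply]
  rfl

set_option maxHeartbeats 2000000 in
theorem comp_InvB :
    (InvMap R A B M f g hf hg).comp (FwdQ R A B M B g)
      = LinearMap.inr R (augTensorRestrict R f M) (augTensorRestrict R g M) := by
  refine Submodule.linearMap_qext _ (TensorProduct.ext' fun y m => ?_)
  show Phi R A B M f g (MonoidAlgebra.mapDomain g (y : MonoidAlgebra R B)) m
    = (0, Submodule.Quotient.mk (y ⊗ₜ[R] m))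
  rw [Phi_mapDomain_apply]
  have h3 : ((y : MonoidAlgebra R B).coeff.sum fun b r => r • dd R A B M f g (g b) m)
      = (y : MonoidAlgebra R B).coeff.sum fun b r =>
        LinearMap.inr R (augTensorRestrict R f M) (augTensorRestrict R g M)
          (r • mkTB R A B M g ⟨MonoidAlgebra.of R B b - 1,
            of_sub_one_mem_augIdeal R B b⟩ m) := by
    refine Finsupp.sum_congr fun b _ => ?_
    rw [hg b, dd_inr, LinearMap.inr_apply]
    rw [show ∀ (u : augTensorRestrict R g M) (r : R),
        r • (((0 : augTensorRestrict R f M), u)) = ((0 : augTensorRestrict R f M), r • u)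
      from fun u r => by rw [Prod.smul_mk, smul_zero]]
  rw [h3, ← map_finsuppSum, ← mkTB_eq_sum R A B M g y m, LinearMap.inr_apply]
  rfl

set_option maxHeartbeats 2000000 in
include hf hg in
theorem comp_Inv_Fwd :
    (InvMap R A B M f g hf hg).comp (Fwd R A B M f g) = LinearMap.id := by
  rw [Fwd, LinearMap.comp_coprod, comp_InvA R A B M f g hf hg,
    comp_InvB R A B M f g hf hg, LinearMap.coprod_inl_inr]

end Main3

set_option maxHeartbeats 2000000 in
theorem exists_linearEquiv_augTensor_coprod
    (R : Type*) [CommRing R] (A B : Type*) [Group A] [Group B]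
    (M : Type*) [AddCommGroup M] [Module R M]
    [Module (MonoidAlgebra R (A ∗ B)) M] [IsScalarTower R (MonoidAlgebra R (A ∗ B)) M]
    (f : GroupHom A (A ∗ B)) (g : GroupHom B (A ∗ B))
    (hf : ∀ a : A, f a = Monoid.Coprod.inl a) (hg : ∀ b : B, g b = Monoid.Coprod.inr b) :
    ∃ e : (augTensorRestrict R f M × augTensorRestrict R g M) ≃ₗ[R]
          augTensor R (A ∗ B) M,
      (∀ (x : augIdeal R A) (m : M),
        e (augTensorRestrictMk R f M x m, 0) =
          augTensorMk R (A ∗ B) M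
            ⟨MonoidAlgebra.mapDomainRingHom R f (x : MonoidAlgebra R A),
              mapDomain_mem_augIdeal R f x⟩ m) ∧
      (∀ (y : augIdeal R B) (m : M),
        e (0, augTensorRestrictMk R g M y m) =
          augTensorMk R (A ∗ B) M
            ⟨MonoidAlgebra.mapDomainRingHom R g (y : MonoidAlgebra R B),
              mapDomain_mem_augIdeal R g y⟩ m) := by
  refine ⟨LinearEquiv.ofLinear (Fwd R A B M f g) (InvMap R A B M f g hf hg)
    (comp_Fwd_Inv R A B M f g hf hg) (comp_Inv_Fwd R A B M f g hf hg), ?_, ?_⟩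
  · intro x m
    rw [LinearEquiv.ofLinear_apply, Fwd_pair, map_zero, add_zero]
    rfl
  · intro y m
    rw [LinearEquiv.ofLinear_apply, Fwd_pair, map_zero, zero_add]
    rfl
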